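/- Let h ≥ 1 be an integer, let Q = Q_{h+3} ⊂ ℝ^3 be the convex hull of {(0,0,0),(1,0,0),(0,1,0),(0,0,1),(1,0,1),(0,1,1),(1,1,h+3),(1,1,h+4)}, and let Q' ⊂ ℝ^4 be the convex hull of {(α,1) : α a vertex of Q} ∪ {(0,0,0,0)}. Then for every integer m ≥ 2 the point (1,1,3,2,m) ∈ ℤ^5 is a hole of Q'; consequently Q' has infinitely many holes and is not very ample. -/

import Mathlib

open Finset

noncomputable section

/-- Cast an integer lattice point to a real point. -/
def castPt {d : ℕ} (a : Fin d → ℤ) : Fin d → ℝ := fun i => (a i : ℝ)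

/-- The cone of nonnegative real combinations of a set of vectors. -/
def coneOf {d : ℕ} (A : Set (Fin d → ℝ)) : Set (Fin d → ℝ) :=
  {x | ∃ (n : ℕ) (c : Fin n → ℝ) (v : Fin n → (Fin d → ℝ)),
    (∀ i, 0 ≤ c i) ∧ (∀ i, v i ∈ A) ∧ x = ∑ i, c i • v i}

/-- `A_P = {(α,1) : α ∈ P ∩ ℤ^d} ⊂ ℤ^(d+1)`. -/
def APts {d : ℕ} (P : Set (Fin d → ℝ)) : Set (Fin (d+1) → ℤ) :=
  {b | b (Fin.last d) = 1 ∧ castPt (fun i : Fin d => b i.castSucc) ∈ P}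

/-- `Q' ⊂ ℝ^4`: the pyramid over `Q_{h+3}` lifted at height 1, together with the origin. -/
def Qpyr (h : ℤ) : Set (Fin 4 → ℝ) := convexHull ℝ
  ({![0,0,0,1], ![1,0,0,1], ![0,1,0,1], ![0,0,1,1], ![1,0,1,1], ![0,1,1,1],
    ![1,1,(h : ℝ)+3,1], ![1,1,(h : ℝ)+4,1], ![0,0,0,0]} : Set (Fin 4 → ℝ))

section Aux

set_option linter.unusedTactic false
set_option linter.unreachableTactic false
set_option linter.unnecessarySeqFocus false
set_option linter.unusedVariables false

lemma qpyr_le (h : ℤ) (w : Fin 4 → ℝ) (c : ℝ)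
    (H : ∀ v ∈ ({![0,0,0,1], ![1,0,0,1], ![0,1,0,1], ![0,0,1,1], ![1,0,1,1], ![0,1,1,1],
      ![1,1,(h : ℝ)+3,1], ![1,1,(h : ℝ)+4,1], ![0,0,0,0]} : Set (Fin 4 → ℝ)),
      ∑ i, w i * v i ≤ c) :
    ∀ x ∈ Qpyr h, ∑ i, w i * x i ≤ c := by
  have hconv : Convex ℝ {x : Fin 4 → ℝ | ∑ i, w i * x i ≤ c} := by
    apply convex_halfSpace_le
    constructor
    · intro x y; simp [mul_add, Finset.sum_add_distrib]
    · intro a x; simp [Finset.mul_sum]; congr 1; funext i; ring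
  intro x hx
  exact convexHull_min H hconv hx

lemma apts_real (h : ℤ) {b : Fin 5 → ℤ} (hb : b ∈ APts (Qpyr h)) (w : Fin 4 → ℝ) (c : ℝ)
    (H : ∀ v ∈ ({![0,0,0,1], ![1,0,0,1], ![0,1,0,1], ![0,0,1,1], ![1,0,1,1], ![0,1,1,1],
      ![1,1,(h : ℝ)+3,1], ![1,1,(h : ℝ)+4,1], ![0,0,0,0]} : Set (Fin 4 → ℝ)),
      ∑ i, w i * v i ≤ c) :
    w 0 * (b 0 : ℝ) + w 1 * b 1 + w 2 * b 2 + w 3 * b 3 ≤ c := by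
  have := qpyr_le h w c H _ hb.2
  simpa [castPt, Fin.sum_univ_four] using this

lemma apts_facts (h : ℤ) (hh : 1 ≤ h) {b : Fin 5 → ℤ} (hb : b ∈ APts (Qpyr h)) :
    b 4 = 1 ∧ 0 ≤ b 0 ∧ b 0 ≤ b 3 ∧ 0 ≤ b 1 ∧ b 1 ≤ b 3 ∧ 0 ≤ b 2 ∧ b 3 ≤ 1 ∧
    b 2 ≤ b 3 + (h+3)*b 0 ∧ b 2 ≤ b 3 + (h+3)*b 1 ∧ (h+3)*(b 0 + b 1 - b 3) ≤ b 2 := by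
  have h1 : (1:ℝ) ≤ (h:ℝ) := by exact_mod_cast hh
  have key : ∀ (w : Fin 4 → ℝ) (c : ℝ),
      (∀ v ∈ ({![0,0,0,1], ![1,0,0,1], ![0,1,0,1], ![0,0,1,1], ![1,0,1,1], ![0,1,1,1],
        ![1,1,(h : ℝ)+3,1], ![1,1,(h : ℝ)+4,1], ![0,0,0,0]} : Set (Fin 4 → ℝ)),
        ∑ i, w i * v i ≤ c) →
      w 0 * (b 0 : ℝ) + w 1 * b 1 + w 2 * b 2 + w 3 * b 3 ≤ c :=
    fun w c H => apts_real h hb w c H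
  refine ⟨hb.1, ?_, ?_, ?_, ?_, ?_, ?_, ?_, ?_, ?_⟩
  · have H := key ![-1,0,0,0] 0 (by
      rintro v hv
      simp only [Set.mem_insert_iff, Set.mem_singleton_iff] at hv
      rcases hv with rfl|rfl|rfl|rfl|rfl|rfl|rfl|rfl|rfl <;>
        simp [Fin.sum_univ_four] <;> linarith)
    simp at H
    exact_mod_cast H
  · have H := key ![1,0,0,-1] 0 (by
      rintro v hv
      simp only [Set.mem_insert_iff, Set.mem_singleton_iff] at hv
      rcases hv with rfl|rfl|rfl|rfl|rfl|rfl|rfl|rfl|rfl <;>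
        simp [Fin.sum_univ_four] <;> linarith)
    simp at H
    exact_mod_cast H
  · have H := key ![0,-1,0,0] 0 (by
      rintro v hv
      simp only [Set.mem_insert_iff, Set.mem_singleton_iff] at hv
      rcases hv with rfl|rfl|rfl|rfl|rfl|rfl|rfl|rfl|rfl <;>
        simp [Fin.sum_univ_four] <;> linarith)
    simp at H
    exact_mod_cast H
  · have H := key ![0,1,0,-1] 0 (by
      rintro v hv
      simp only [Set.mem_insert_iff, Set.mem_singleton_iff] at hv
      rcases hv with rfl|rfl|rfl|rfl|rfl|rfl|rfl|rfl|rfl <;>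
        simp [Fin.sum_univ_four] <;> linarith)
    simp at H
    exact_mod_cast H
  · have H := key ![0,0,-1,0] 0 (by
      rintro v hv
      simp only [Set.mem_insert_iff, Set.mem_singleton_iff] at hv
      rcases hv with rfl|rfl|rfl|rfl|rfl|rfl|rfl|rfl|rfl <;>
        simp [Fin.sum_univ_four] <;> linarith)
    simp at H
    exact_mod_cast H
  · have H := key ![0,0,0,1] 1 (by
      rintro v hv
      simp only [Set.mem_insert_iff, Set.mem_singleton_iff] at hv
      rcases hv with rfl|rfl|rfl|rfl|rfl|rfl|rfl|rfl|rfl <;>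
        simp [Fin.sum_univ_four] <;> linarith)
    simp at H
    exact_mod_cast H
  · have H := key ![-((h:ℝ)+3),0,1,-1] 0 (by
      rintro v hv
      simp only [Set.mem_insert_iff, Set.mem_singleton_iff] at hv
      rcases hv with rfl|rfl|rfl|rfl|rfl|rfl|rfl|rfl|rfl <;>
        simp [Fin.sum_univ_four] <;> linarith)
    simp at H
    have : (b 2 : ℝ) ≤ (b 3 : ℝ) + ((h:ℝ)+3) * (b 0 : ℝ) := by linarith
    exact_mod_cast this
  · have H := key ![0,-((h:ℝ)+3),1,-1] 0 (by
      rintro v hv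
      simp only [Set.mem_insert_iff, Set.mem_singleton_iff] at hv
      rcases hv with rfl|rfl|rfl|rfl|rfl|rfl|rfl|rfl|rfl <;>
        simp [Fin.sum_univ_four] <;> linarith)
    simp at H
    have : (b 2 : ℝ) ≤ (b 3 : ℝ) + ((h:ℝ)+3) * (b 1 : ℝ) := by linarith
    exact_mod_cast this
  · have H := key ![(h:ℝ)+3,(h:ℝ)+3,-1,-((h:ℝ)+3)] 0 (by
      rintro v hv
      simp only [Set.mem_insert_iff, Set.mem_singleton_iff] at hv
      rcases hv with rfl|rfl|rfl|rfl|rfl|rfl|rfl|rfl|rfl <;>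
        simp [Fin.sum_univ_four] <;> linarith)
    simp at H
    have : ((h:ℝ)+3) * ((b 0 : ℝ) + (b 1:ℝ) - (b 3:ℝ)) ≤ (b 2 : ℝ) := by linarith
    exact_mod_cast this

lemma mem_apts (h : ℤ) (p : Fin 5 → ℤ) (v : Fin 4 → ℝ)
    (h4 : p (Fin.last 4) = 1)
    (hv : v ∈ ({![0,0,0,1], ![1,0,0,1], ![0,1,0,1], ![0,0,1,1], ![1,0,1,1], ![0,1,1,1],
      ![1,1,(h : ℝ)+3,1], ![1,1,(h : ℝ)+4,1], ![0,0,0,0]} : Set (Fin 4 → ℝ)))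
    (hcast : castPt (fun i : Fin 4 => p i.castSucc) = v) : p ∈ APts (Qpyr h) :=
  ⟨h4, hcast ▸ subset_convexHull ℝ _ hv⟩

lemma p1_mem (h : ℤ) : (![1,0,1,1,1] : Fin 5 → ℤ) ∈ APts (Qpyr h) := by
  refine mem_apts h _ ![1,0,1,1] rfl ?_ ?_
  · simp only [Set.mem_insert_iff, Set.mem_singleton_iff]; tauto
  · funext i; fin_cases i <;> simp [castPt, show Fin.castSucc (2:Fin 4) = (2:Fin 5) from rfl,
      show Fin.castSucc (3:Fin 4) = (3:Fin 5) from rfl]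

lemma p2_mem (h : ℤ) : (![0,1,1,1,1] : Fin 5 → ℤ) ∈ APts (Qpyr h) := by
  refine mem_apts h _ ![0,1,1,1] rfl ?_ ?_
  · simp only [Set.mem_insert_iff, Set.mem_singleton_iff]; tauto
  · funext i; fin_cases i <;> simp [castPt, show Fin.castSucc (2:Fin 4) = (2:Fin 5) from rfl,
      show Fin.castSucc (3:Fin 4) = (3:Fin 5) from rfl]

lemma p3_mem (h : ℤ) : (![0,0,1,1,1] : Fin 5 → ℤ) ∈ APts (Qpyr h) := by
  refine mem_apts h _ ![0,0,1,1] rfl ?_ ?_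
  · simp only [Set.mem_insert_iff, Set.mem_singleton_iff]; tauto
  · funext i; fin_cases i <;> simp [castPt, show Fin.castSucc (2:Fin 4) = (2:Fin 5) from rfl,
      show Fin.castSucc (3:Fin 4) = (3:Fin 5) from rfl]

lemma p4_mem (h : ℤ) : (![0,0,0,1,1] : Fin 5 → ℤ) ∈ APts (Qpyr h) := by
  refine mem_apts h _ ![0,0,0,1] rfl ?_ ?_
  · simp only [Set.mem_insert_iff, Set.mem_singleton_iff]; tauto
  · funext i; fin_cases i <;> simp [castPt, show Fin.castSucc (2:Fin 4) = (2:Fin 5) from rfl,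
      show Fin.castSucc (3:Fin 4) = (3:Fin 5) from rfl]

lemma p5_mem (h : ℤ) : (![0,0,0,0,1] : Fin 5 → ℤ) ∈ APts (Qpyr h) := by
  refine mem_apts h _ ![0,0,0,0] rfl ?_ ?_
  · simp only [Set.mem_insert_iff, Set.mem_singleton_iff]; tauto
  · funext i; fin_cases i <;> simp [castPt, show Fin.castSucc (2:Fin 4) = (2:Fin 5) from rfl,
      show Fin.castSucc (3:Fin 4) = (3:Fin 5) from rfl]

lemma p6_mem (h : ℤ) : (![1,1,h+3,1,1] : Fin 5 → ℤ) ∈ APts (Qpyr h) := by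
  refine mem_apts h _ ![1,1,(h:ℝ)+3,1] rfl ?_ ?_
  · simp only [Set.mem_insert_iff, Set.mem_singleton_iff]; tauto
  · funext i; fin_cases i <;> simp [castPt, show Fin.castSucc (2:Fin 4) = (2:Fin 5) from rfl,
      show Fin.castSucc (3:Fin 4) = (3:Fin 5) from rfl] <;> push_cast <;> ring

lemma cone_part (h : ℤ) (hh : 1 ≤ h) (m : ℤ) (hm : 2 ≤ m) :
    castPt (![1, 1, 3, 2, m]) ∈ coneOf (castPt '' APts (Qpyr h)) := by
  have hpos : (0:ℝ) < (h:ℝ) + 2 := by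
    have : (1:ℝ) ≤ (h:ℝ) := by exact_mod_cast hh
    linarith
  set bb : ℝ := 1/((h:ℝ)+2) with hbb
  have hbb0 : 0 ≤ bb := by positivity
  have hbb1 : bb ≤ 1 := by
    rw [hbb, div_le_one hpos]
    have : (1:ℝ) ≤ (h:ℝ) := by exact_mod_cast hh
    linarith
  refine ⟨5, ![1-bb, 1-bb, bb, bb, (m:ℝ)-2],
    ![castPt ![1,0,1,1,1], castPt ![0,1,1,1,1], castPt ![1,1,h+3,1,1],
      castPt ![0,0,1,1,1], castPt ![0,0,0,0,1]], ?_, ?_, ?_⟩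
  · intro i
    have hm' : (2:ℝ) ≤ (m:ℝ) := by exact_mod_cast hm
    fin_cases i <;> simp <;> linarith
  · intro i
    fin_cases i
    · exact ⟨_, p1_mem h, rfl⟩
    · exact ⟨_, p2_mem h, rfl⟩
    · exact ⟨_, p6_mem h, rfl⟩
    · exact ⟨_, p3_mem h, rfl⟩
    · exact ⟨_, p5_mem h, rfl⟩
  · funext j
    have hne : (h:ℝ) + 2 ≠ 0 := ne_of_gt hpos
    rw [hbb]
    fin_cases j <;>
      · simp only [castPt, Finset.sum_apply, Pi.smul_apply, smul_eq_mul, Fin.sum_univ_five,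
          Matrix.cons_val_zero, Matrix.cons_val_one, Matrix.cons_val_two, Matrix.cons_val_three,
          Matrix.cons_val_four, Matrix.head_cons, Matrix.tail_cons]
        push_cast
        try field_simp
        try ring
        try rw [eq_comm, ← sub_eq_zero]; field_simp; ring

lemma grp_part (h : ℤ) (m : ℤ) :
    (![1, 1, 3, 2, m] : Fin 5 → ℤ) ∈ AddSubgroup.closure (APts (Qpyr h)) := by
  have e : (![1, 1, 3, 2, m] : Fin 5 → ℤ)
      = ![1,0,1,1,1] + ![0,1,1,1,1] + ![0,0,1,1,1] + (m-2) • ![0,0,0,0,1] - ![0,0,0,1,1] := by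
    funext j
    fin_cases j <;> simp <;> ring
  rw [e]
  exact sub_mem (add_mem (add_mem (add_mem
    (AddSubgroup.subset_closure (p1_mem h)) (AddSubgroup.subset_closure (p2_mem h)))
    (AddSubgroup.subset_closure (p3_mem h)))
    (AddSubgroup.zsmul_mem _ (AddSubgroup.subset_closure (p5_mem h)) _))
    (AddSubgroup.subset_closure (p4_mem h))

def Pinv (h : ℤ) (b : Fin 5 → ℤ) : Prop :=
  (0 ≤ b 0 ∧ b 0 ≤ b 3 ∧ 0 ≤ b 1 ∧ b 1 ≤ b 3 ∧ 0 ≤ b 2 ∧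
   b 2 ≤ b 3 + (h+3)*b 0 ∧ b 2 ≤ b 3 + (h+3)*b 1 ∧ (h+3)*(b 0 + b 1 - b 3) ≤ b 2) ∧
  (b 3 = 2 → b 0 = 1 → b 1 = 1 → b 2 ≤ 2 ∨ h+3 ≤ b 2)

lemma key_add (h a0 a1 a2 a3 b0 b1 b2 b3 : ℤ) (hh : 1 ≤ h)
    (ha1 : 0 ≤ a0) (ha2 : a0 ≤ a3) (ha3 : 0 ≤ a1) (ha4 : a1 ≤ a3) (ha5 : 0 ≤ a2)
    (ha6 : a2 ≤ a3 + (h+3)*a0) (ha7 : a2 ≤ a3 + (h+3)*a1) (ha8 : (h+3)*(a0+a1-a3) ≤ a2)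
    (hb1 : 0 ≤ b0) (hb2 : b0 ≤ b3) (hb3 : 0 ≤ b1) (hb4 : b1 ≤ b3) (hb5 : 0 ≤ b2)
    (hb6 : b2 ≤ b3 + (h+3)*b0) (hb7 : b2 ≤ b3 + (h+3)*b1) (hb8 : (h+3)*(b0+b1-b3) ≤ b2)
    (akey : a3 = 2 → a0 = 1 → a1 = 1 → a2 ≤ 2 ∨ h+3 ≤ a2)
    (bkey : b3 = 2 → b0 = 1 → b1 = 1 → b2 ≤ 2 ∨ h+3 ≤ b2)
    (h3 : a3 + b3 = 2) (h0 : a0 + b0 = 1) (h1 : a1 + b1 = 1) :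
    a2 + b2 ≤ 2 ∨ h+3 ≤ a2 + b2 := by
  have hcase : a3 = 0 ∨ a3 = 1 ∨ a3 = 2 := by omega
  rcases hcase with rfl | rfl | rfl
  · have e0 : a0 = 0 := by omega
    have e1 : a1 = 0 := by omega
    subst e0; subst e1
    have ea2 : a2 = 0 := by nlinarith
    have := bkey (by omega) (by omega) (by omega)
    omega
  · have eb3 : b3 = 1 := by omega
    subst eb3
    have c0 : a0 = 0 ∨ a0 = 1 := by omega
    have c1 : a1 = 0 ∨ a1 = 1 := by omega
    rcases c0 with rfl | rfl <;> rcases c1 with rfl | rfl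
    · have eb0 : b0 = 1 := by omega
      have eb1 : b1 = 1 := by omega
      subst eb0; subst eb1
      right; nlinarith
    · have eb1 : b1 = 0 := by omega
      subst eb1
      left; nlinarith
    · have eb0 : b0 = 0 := by omega
      subst eb0
      left; nlinarith
    · right; nlinarith
  · have eb3 : b3 = 0 := by omega
    subst eb3
    have eb0 : b0 = 0 := by omega
    have eb1 : b1 = 0 := by omega
    subst eb0; subst eb1
    have eb2 : b2 = 0 := by nlinarith
    have := akey rfl (by omega) (by omega)
    omega

lemma pinv_zero (h : ℤ) : Pinv h 0 := by
  constructor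
  · norm_num [Pinv]
  · intro h3; norm_num at h3

lemma pinv_add (h : ℤ) (hh : 1 ≤ h) (a b : Fin 5 → ℤ) (pa : Pinv h a) (pb : Pinv h b) :
    Pinv h (a + b) := by
  obtain ⟨⟨a1, a2, a3, a4, a5, a6, a7, a8⟩, akey⟩ := pa
  obtain ⟨⟨b1, b2, b3, b4, b5, b6, b7, b8⟩, bkey⟩ := pb
  refine ⟨⟨?_, ?_, ?_, ?_, ?_, ?_, ?_, ?_⟩, ?_⟩ <;> simp only [Pi.add_apply]
  · linarith
  · linarith
  · linarith
  · linarith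
  · linarith
  · nlinarith
  · nlinarith
  · nlinarith
  · intro h3 h0 h1
    exact key_add h (a 0) (a 1) (a 2) (a 3) (b 0) (b 1) (b 2) (b 3) hh
      a1 a2 a3 a4 a5 a6 a7 a8 b1 b2 b3 b4 b5 b6 b7 b8 akey bkey h3 h0 h1

lemma pinv_gen (h : ℤ) (hh : 1 ≤ h) (b : Fin 5 → ℤ) (hb : b ∈ APts (Qpyr h)) : Pinv h b := by
  obtain ⟨_, c1, c2, c3, c4, c5, c6, c7, c8, c9⟩ := apts_facts h hh hb
  exact ⟨⟨c1, c2, c3, c4, c5, c7, c8, c9⟩, fun h3 => absurd h3 (by omega)⟩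

lemma not_monoid (h : ℤ) (hh : 1 ≤ h) (m : ℤ) :
    (![1, 1, 3, 2, m] : Fin 5 → ℤ) ∉ AddSubmonoid.closure (APts (Qpyr h)) := by
  intro hmem
  have hp : Pinv h ![1,1,3,2,m] := by
    refine AddSubmonoid.closure_induction ?_ (pinv_zero h) ?_ hmem
    · exact fun x hx => pinv_gen h hh x hx
    · exact fun x y _ _ px py => pinv_add h hh x y px py
  have := hp.2 rfl rfl rfl
  simp only [Matrix.cons_val_two, Matrix.tail_cons, Matrix.head_cons] at this
  omega

end Aux

theorem stmt_3 (h : ℤ) (hh : 1 ≤ h) :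
    (∀ m : ℤ, 2 ≤ m →
      castPt (![1, 1, 3, 2, m]) ∈ coneOf (castPt '' APts (Qpyr h)) ∧
      (![1, 1, 3, 2, m] : Fin 5 → ℤ) ∈ AddSubgroup.closure (APts (Qpyr h)) ∧
      (![1, 1, 3, 2, m] : Fin 5 → ℤ) ∉ AddSubmonoid.closure (APts (Qpyr h))) ∧
    {b : Fin 5 → ℤ | castPt b ∈ coneOf (castPt '' APts (Qpyr h)) ∧
      b ∈ AddSubgroup.closure (APts (Qpyr h)) ∧
      b ∉ AddSubmonoid.closure (APts (Qpyr h))}.Infinite := by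
  have main : ∀ m : ℤ, 2 ≤ m →
      castPt (![1, 1, 3, 2, m]) ∈ coneOf (castPt '' APts (Qpyr h)) ∧
      (![1, 1, 3, 2, m] : Fin 5 → ℤ) ∈ AddSubgroup.closure (APts (Qpyr h)) ∧
      (![1, 1, 3, 2, m] : Fin 5 → ℤ) ∉ AddSubmonoid.closure (APts (Qpyr h)) :=
    fun m hm => ⟨cone_part h hh m hm, grp_part h m, not_monoid h hh m⟩
  refine ⟨main, ?_⟩
  apply Set.infinite_of_injective_forall_mem
    (f := fun n : ℕ => (![1, 1, 3, 2, (n:ℤ)+2] : Fin 5 → ℤ))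
  · intro a b hab
    have := congrFun hab 4
    simp only [Matrix.cons_val_four, Matrix.cons_val_fin_one, Matrix.tail_cons,
      Matrix.head_cons] at this
    exact_mod_cast add_right_cancel this
  · intro n
    exact main ((n:ℤ)+2) (by omega)

end
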